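/- Let x lie in the open unit disk of ℝ² and let v ∈ ℝ² with v ≠ 0. Then v·x_b(x,v) < 0, the functions t_b and x_b are differentiable at (x,v), and, writing t_b = t_b(x,v) and x_b = x_b(x,v), their derivatives are: ∇_x t_b = x_b/(v·x_b), ∇_v t_b = −t_b·x_b/(v·x_b), ∇_x x_b = I − (v⊗x_b)/(v·x_b), and ∇_v x_b = −t_b·(I − (v⊗x_b)/(v·x_b)). -/

import Mathlib

noncomputable section

open Matrix Real Set Topology Filter

/-- The Euclidean plane ℝ². -/
abbrev E : Type := EuclideanSpace ℝ (Fin 2)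

/-- Dot product on ℝ². -/
def dot (a b : E) : ℝ := a 0 * b 0 + a 1 * b 1

/-- Build a vector of ℝ² from its components. -/
def toE (f : Fin 2 → ℝ) : E := (WithLp.equiv 2 (Fin 2 → ℝ)).symm f

/-- Tensor (outer) product a⊗b, (a⊗b)_{ij} = aᵢ bⱼ. -/
def outer (a b : E) : Matrix (Fin 2) (Fin 2) ℝ := Matrix.of fun i j => a i * b j

/-- Matrix acting on a column vector. -/
def mulV (M : Matrix (Fin 2) (Fin 2) ℝ) (v : E) : E := toE fun i => M i 0 * v 0 + M i 1 * v 1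

/-- Row vector multiplied by a matrix on the right. -/
def vMulM (w : E) (M : Matrix (Fin 2) (Fin 2) ℝ) : E := toE fun j => w 0 * M 0 j + w 1 * M 1 j

/-- Specular reflection matrix R_n = I - 2 n⊗n. -/
def Rmat (n : E) : Matrix (Fin 2) (Fin 2) ℝ := 1 - (2 : ℝ) • outer n n

/-- The matrix A_{v,n} = ((v·n) I + n⊗v)(I - (v⊗n)/(v·n)). -/
def Amat (v n : E) : Matrix (Fin 2) (Fin 2) ℝ :=
  (dot v n • (1 : Matrix (Fin 2) (Fin 2) ℝ) + outer n v) *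
    (1 - (dot v n)⁻¹ • outer v n)

/-- Counterclockwise rotation by π/2. -/
def Qmat : Matrix (Fin 2) (Fin 2) ℝ := !![0, -1; 1, 0]

/-- Backward exit time from the closed unit disk. -/
def tb (x v : E) : ℝ := sSup {s : ℝ | 0 ≤ s ∧ ‖x - s • v‖ ≤ 1}

/-- Backward exit point from the closed unit disk. -/
def xb (x v : E) : E := x - tb x v • v

/-- The i-th column of a 2×2 matrix, as a vector of ℝ². -/
def colE (M : Matrix (Fin 2) (Fin 2) ℝ) (i : Fin 2) : E := toE fun k => M k i

/-- A 2×2 matrix as a continuous linear map ℝ² → ℝ². -/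
def toCLM (M : Matrix (Fin 2) (Fin 2) ℝ) : E →L[ℝ] E :=
  LinearMap.toContinuousLinearMap (Matrix.toEuclideanLin M)

open RealInnerProductSpace


def Del (x v : E) : ℝ := (⟪x, v⟫) ^ 2 + ‖v‖ ^ 2 * (1 - ‖x‖ ^ 2)
def sg (x v : E) : ℝ := Real.sqrt (Del x v)
def Tf (x v : E) : ℝ := ((⟪x, v⟫) + sg x v) / ‖v‖ ^ 2

variable {x v : E}

lemma del_pos (hx : ‖x‖ < 1) (hv : v ≠ 0) : 0 < Del x v := by
  have h1 : 0 < ‖v‖ := norm_pos_iff.mpr hv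
  have h2 : 0 ≤ (⟪x, v⟫) ^ 2 := sq_nonneg _
  have h3 : ‖x‖ ^ 2 < 1 := by nlinarith [norm_nonneg x]
  unfold Del
  nlinarith [mul_pos (pow_pos h1 2) (show (0:ℝ) < 1 - ‖x‖ ^ 2 by linarith)]

lemma sg_pos (hx : ‖x‖ < 1) (hv : v ≠ 0) : 0 < sg x v :=
  Real.sqrt_pos.mpr (del_pos hx hv)

lemma sg_sq (hx : ‖x‖ < 1) (hv : v ≠ 0) : sg x v ^ 2 = Del x v :=
  Real.sq_sqrt (del_pos hx hv).le

lemma abs_lt_sg (hx : ‖x‖ < 1) (hv : v ≠ 0) : |(⟪x, v⟫)| < sg x v := by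
  have h1 : 0 < ‖v‖ := norm_pos_iff.mpr hv
  have h3 : ‖x‖ ^ 2 < 1 := by nlinarith [norm_nonneg x]
  have h4 : (⟪x, v⟫) ^ 2 < Del x v := by
    unfold Del
    nlinarith [mul_pos (pow_pos h1 2) (show (0:ℝ) < 1 - ‖x‖ ^ 2 by linarith)]
  have h5 := sg_sq hx hv
  have h6 := sg_pos hx hv
  nlinarith [abs_nonneg (⟪x, v⟫), sq_abs (⟪x, v⟫)]

lemma Tf_pos (hx : ‖x‖ < 1) (hv : v ≠ 0) : 0 < Tf x v := by
  have h1 : 0 < ‖v‖ := norm_pos_iff.mpr hv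
  have h2 := abs_lt_sg hx hv
  have := abs_nonneg (⟪x, v⟫)
  have h3 := neg_abs_le (⟪x, v⟫)
  unfold Tf
  apply div_pos
  · nlinarith [neg_abs_le (⟪x, v⟫)]
  · positivity

lemma tb_eq (hx : ‖x‖ < 1) (hv : v ≠ 0) : tb x v = Tf x v := by
  have h1 : 0 < ‖v‖ := norm_pos_iff.mpr hv
  have h2 := abs_lt_sg hx hv
  have h5 := sg_sq hx hv
  have h6 := sg_pos hx hv
  have hset : {s : ℝ | 0 ≤ s ∧ ‖x - s • v‖ ≤ 1} = Icc 0 (Tf x v) := by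
    ext s
    have hexp : ‖x - s • v‖ ^ 2 = ‖x‖ ^ 2 - 2 * s * (⟪x, v⟫) + s ^ 2 * ‖v‖ ^ 2 := by
      rw [norm_sub_sq_real, real_inner_smul_right, norm_smul]
      simp [mul_pow]
      ring
    have hiff : ‖x - s • v‖ ≤ 1 ↔ ‖x‖ ^ 2 - 2 * s * (⟪x, v⟫) + s ^ 2 * ‖v‖ ^ 2 ≤ 1 := by
      rw [← hexp]
      constructor <;> intro h <;> nlinarith [norm_nonneg (x - s • v)]
    simp only [Set.mem_setOf_eq, Set.mem_Icc, hiff]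
    constructor
    · rintro ⟨hs0, hq⟩
      refine ⟨hs0, ?_⟩
      by_contra hlt
      push_neg at hlt
      have h7 : ‖v‖ ^ 2 * s - (⟪x, v⟫) > sg x v := by
        unfold Tf at hlt
        have := (div_lt_iff₀ (by positivity : (0:ℝ) < ‖v‖ ^ 2)).mp hlt
        nlinarith
      have h8 : (‖v‖ ^ 2 * s - (⟪x, v⟫)) ^ 2 > sg x v ^ 2 := by nlinarith
      unfold Del at h5
      nlinarith [mul_le_mul_of_nonneg_left hq (pow_pos h1 2).le]
    · rintro ⟨hs0, hsT⟩
      refine ⟨hs0, ?_⟩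
      have hr : (⟪x, v⟫) - sg x v ≤ s * ‖v‖ ^ 2 := by
        nlinarith [le_abs_self (⟪x, v⟫), mul_nonneg hs0 (pow_pos h1 2).le]
      have hr2 : s * ‖v‖ ^ 2 ≤ (⟪x, v⟫) + sg x v := by
        unfold Tf at hsT
        have := (le_div_iff₀ (by positivity : (0:ℝ) < ‖v‖ ^ 2)).mp hsT
        nlinarith
      unfold Del at h5
      have key : ‖v‖ ^ 2 * (‖x‖ ^ 2 - 2 * s * (⟪x, v⟫) + s ^ 2 * ‖v‖ ^ 2) ≤ ‖v‖ ^ 2 * 1 := by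
        nlinarith [mul_nonneg (sub_nonneg.mpr hr) (sub_nonneg.mpr hr2)]
      have := (mul_le_mul_iff_right₀ (pow_pos h1 2)).mp key
      linarith
  rw [tb, hset, csSup_Icc (Tf_pos hx hv).le]

lemma inner_v_xb (hx : ‖x‖ < 1) (hv : v ≠ 0) : (⟪v, xb x v⟫ : ℝ) = - sg x v := by
  have hn : (‖v‖:ℝ) ^ 2 ≠ 0 := pow_ne_zero 2 (norm_ne_zero_iff.mpr hv)
  rw [xb, tb_eq hx hv, inner_sub_right, real_inner_smul_right,
    real_inner_self_eq_norm_sq, Tf, real_inner_comm]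
  field_simp
  ring

lemma norm_sq_fderiv (z : E) : HasFDerivAt (fun y : E => ‖y‖ ^ 2) ((2:ℝ) • innerSL ℝ z) z := by
  have h := (hasFDerivAt_id z).inner ℝ (hasFDerivAt_id z)
  simp only [id_eq] at h
  have hfun : (fun y : E => (⟪y, y⟫ : ℝ)) = fun y : E => ‖y‖ ^ 2 := by
    funext y; exact real_inner_self_eq_norm_sq y
  rw [hfun] at h
  refine HasFDerivAt.congr_fderiv h (Eq.symm ?_)
  ext w
  simp [real_inner_comm]
  ring

lemma inner_right_fderiv (z : E) : HasFDerivAt (fun y : E => (⟪y, v⟫ : ℝ)) (innerSL ℝ v) z := by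
  have hfun : (fun y : E => (⟪y, v⟫ : ℝ)) = innerSL ℝ v := by
    funext y; simp only [innerSL_apply_apply]; exact (real_inner_comm y v).symm
  rw [hfun]; exact (innerSL ℝ v).hasFDerivAt

lemma hasFDerivAt_Tf1 (hx : ‖x‖ < 1) (hv : v ≠ 0) :
    HasFDerivAt (fun y => Tf y v) (innerSL ℝ ((sg x v)⁻¹ • (Tf x v • v - x))) x := by
  have hδ := del_pos hx hv
  have hσ := sg_pos hx hv
  have hn : (0:ℝ) < ‖v‖ ^ 2 := pow_pos (norm_pos_iff.mpr hv) 2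
  have h1 := inner_right_fderiv (v := v) x
  have hDel : HasFDerivAt (fun y => Del y v)
      (((⟪x, v⟫ : ℝ)) • innerSL ℝ v + ((⟪x, v⟫ : ℝ)) • innerSL ℝ v
        + (‖v‖ ^ 2) • (((0:E →L[ℝ] ℝ)) - (2:ℝ) • innerSL ℝ x)) x := by
    have hfun : (fun y => Del y v)
        = fun y : E => (⟪y, v⟫ : ℝ) * (⟪y, v⟫ : ℝ) + ‖v‖ ^ 2 * (1 - ‖y‖ ^ 2) := by
      funext y; rw [Del]; ring
    rw [hfun]
    exact (h1.mul h1).add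
      (((hasFDerivAt_const (1:ℝ) x).sub (norm_sq_fderiv x)).const_mul (‖v‖ ^ 2))
  have hs := (Real.hasDerivAt_sqrt hδ.ne').comp_hasFDerivAt x hDel
  have hT := (h1.add hs).mul_const ((‖v‖ ^ 2)⁻¹)
  have hfun2 : (fun y => Tf y v)
      = fun y : E => ((⟪y, v⟫ : ℝ) + Real.sqrt (Del y v)) * (‖v‖ ^ 2)⁻¹ := by
    funext y; rw [Tf, sg, div_eq_mul_inv]
  rw [hfun2]
  have hσ' : Real.sqrt (Del x v) ≠ 0 := by rw [sg] at hσ; exact ne_of_gt hσ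
  refine HasFDerivAt.congr_fderiv hT (Eq.symm ?_)
  ext w
  simp only [ContinuousLinearMap.coe_smul', Pi.smul_apply, ContinuousLinearMap.add_apply,
    ContinuousLinearMap.coe_sub', ContinuousLinearMap.zero_apply, Pi.sub_apply,
    innerSL_apply_apply, inner_sub_left, real_inner_smul_left, smul_eq_mul, Tf, sg]
  field_simp
  ring

lemma scalar2 (a n m s xw vw : ℝ) (hs : s ≠ 0) (hn : n ≠ 0) (h : s^2 = a^2 + n*m) :
    (a + s)/n * s⁻¹ * (xw - (a+s)/n * vw)
      = (xw + 1/(2*s) * (a*xw + a*xw + m*(2*vw))) * n⁻¹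
        + (a + s) * (-((n:ℝ)^2)⁻¹ * (2*vw)) := by
  field_simp
  linear_combination (2*vw) * h

lemma hasFDerivAt_Tf2 (hx : ‖x‖ < 1) (hv : v ≠ 0) :
    HasFDerivAt (fun w => Tf x w)
      (innerSL ℝ ((Tf x v * (sg x v)⁻¹) • (x - Tf x v • v))) v := by
  have hδ := del_pos hx hv
  have hσ := sg_pos hx hv
  have hn : (0:ℝ) < ‖v‖ ^ 2 := pow_pos (norm_pos_iff.mpr hv) 2
  have hc1 : HasFDerivAt (fun w : E => (⟪x, w⟫ : ℝ)) (innerSL ℝ x) v :=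
    (innerSL ℝ x).hasFDerivAt
  have hc2 := norm_sq_fderiv v
  have hDel : HasFDerivAt (fun w => Del x w)
      (((⟪x, v⟫ : ℝ)) • innerSL ℝ x + ((⟪x, v⟫ : ℝ)) • innerSL ℝ x
        + (1 - ‖x‖ ^ 2) • ((2:ℝ) • innerSL ℝ v)) v := by
    have hfun : (fun w => Del x w)
        = fun w : E => (⟪x, w⟫ : ℝ) * (⟪x, w⟫ : ℝ) + ‖w‖ ^ 2 * (1 - ‖x‖ ^ 2) := by
      funext w; rw [Del]; ring
    rw [hfun]
    exact (hc1.mul hc1).add (hc2.mul_const (1 - ‖x‖ ^ 2))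
  have hs := (Real.hasDerivAt_sqrt hδ.ne').comp_hasFDerivAt v hDel
  have hinv := (hasDerivAt_inv hn.ne').comp_hasFDerivAt v hc2
  have hT := (hc1.add hs).mul hinv
  have hfun2 : (fun w => Tf x w)
      = fun w : E => ((⟪x, w⟫ : ℝ) + Real.sqrt (Del x w)) * (‖w‖ ^ 2)⁻¹ := by
    funext w; rw [Tf, sg, div_eq_mul_inv]
  rw [hfun2]
  have hσ' : Real.sqrt (Del x v) ≠ 0 := by rw [sg] at hσ; exact ne_of_gt hσ
  have hsq : Real.sqrt (Del x v) ^ 2 = (⟪x, v⟫ : ℝ) ^ 2 + ‖v‖ ^ 2 * (1 - ‖x‖ ^ 2) := by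
    rw [Real.sq_sqrt hδ.le]; rfl
  simp only [Function.comp_def] at hT
  refine HasFDerivAt.congr_fderiv hT (Eq.symm ?_)
  ext w
  simp only [ContinuousLinearMap.coe_smul', Pi.smul_apply, ContinuousLinearMap.add_apply,
    ContinuousLinearMap.coe_sub', ContinuousLinearMap.zero_apply, Pi.sub_apply,
    ContinuousLinearMap.neg_apply, Pi.neg_apply, Pi.add_apply, innerSL_apply_apply, inner_sub_left,
    real_inner_smul_left, smul_eq_mul, Tf, sg]
  linear_combination scalar2 (⟪x, v⟫ : ℝ) (‖v‖ ^ 2) (1 - ‖x‖ ^ 2) (Real.sqrt (Del x v))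
    (⟪x, w⟫ : ℝ) (⟪v, w⟫ : ℝ) hσ' hn.ne' hsq


lemma dot_eq_inner (a b : E) : dot a b = ⟪a, b⟫ := by
  simp [dot, PiLp.inner_apply, RCLike.inner_apply, Fin.sum_univ_two]
  ring

lemma toCLM_apply (M : Matrix (Fin 2) (Fin 2) ℝ) (w : E) (i : Fin 2) :
    toCLM M w i = M i 0 * w 0 + M i 1 * w 1 := by
  simp [toCLM, Matrix.toEuclideanLin_apply, Matrix.mulVec, dotProduct, Fin.sum_univ_two]
  fin_cases i <;> simp

/-- derivatives of the backward exit time and exit point. -/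
theorem stmt0 (x v : E) (hx : ‖x‖ < 1) (hv : v ≠ 0) :
    dot v (xb x v) < 0 ∧
    DifferentiableAt ℝ (fun p : E × E => tb p.1 p.2) (x, v) ∧
    DifferentiableAt ℝ (fun p : E × E => xb p.1 p.2) (x, v) ∧
    gradient (fun y => tb y v) x = (dot v (xb x v))⁻¹ • xb x v ∧
    gradient (fun w => tb x w) v = -((tb x v * (dot v (xb x v))⁻¹) • xb x v) ∧
    HasFDerivAt (fun y => xb y v)
      (toCLM (1 - (dot v (xb x v))⁻¹ • outer v (xb x v))) x ∧
    HasFDerivAt (fun w => xb x w)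
      (toCLM ((-(tb x v)) • (1 - (dot v (xb x v))⁻¹ • outer v (xb x v)))) v := by
  have hσ := sg_pos hx hv
  have hδ := del_pos hx hv
  have hn : (0:ℝ) < ‖v‖ ^ 2 := pow_pos (norm_pos_iff.mpr hv) 2
  have hdot : dot v (xb x v) = - sg x v := by
    rw [dot_eq_inner]; exact inner_v_xb hx hv
  have hxbv : xb x v = x - Tf x v • v := by rw [xb, tb_eq hx hv]
  have hball : ∀ᶠ y : E in 𝓝 x, ‖y‖ < 1 :=
    ContinuousAt.eventually_lt continuous_norm.continuousAt continuousAt_const hx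
  have heq1 : (fun y => tb y v) =ᶠ[𝓝 x] fun y => Tf y v := by
    filter_upwards [hball] with y hy using tb_eq hy hv
  have heq2 : (fun w => tb x w) =ᶠ[𝓝 v] fun w => Tf x w := by
    filter_upwards [eventually_ne_nhds hv] with w hw using tb_eq hx hw
  have hU : IsOpen {p : E × E | ‖p.1‖ < 1 ∧ p.2 ≠ 0} := by
    exact (isOpen_lt (continuous_norm.comp continuous_fst) continuous_const).inter
      (isOpen_ne.preimage continuous_snd)
  have hmem : (x, v) ∈ {p : E × E | ‖p.1‖ < 1 ∧ p.2 ≠ 0} := ⟨hx, hv⟩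
  have heqT : (fun p : E × E => tb p.1 p.2) =ᶠ[𝓝 (x, v)] fun p => Tf p.1 p.2 := by
    filter_upwards [hU.mem_nhds hmem] with p hp using tb_eq hp.1 hp.2
  have d1 : DifferentiableAt ℝ (fun p : E × E => (⟪p.1, p.2⟫ : ℝ)) (x, v) :=
    (differentiable_inner (𝕜 := ℝ)).differentiableAt
  have d2 : DifferentiableAt ℝ (fun p : E × E => ‖p.1‖ ^ 2) (x, v) :=
    (DifferentiableAt.comp (g := fun y : E => ‖y‖^2) (f := Prod.fst) (x, v) (norm_sq_fderiv x).differentiableAt differentiableAt_fst :)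
  have d3 : DifferentiableAt ℝ (fun p : E × E => ‖p.2‖ ^ 2) (x, v) :=
    (differentiableAt_snd.norm_sq ℝ)
  have hDelDiff : DifferentiableAt ℝ (fun p : E × E => Del p.1 p.2) (x, v) := by
    have : DifferentiableAt ℝ
        (fun p : E × E => (⟪p.1, p.2⟫ : ℝ) ^ 2 + ‖p.2‖ ^ 2 * (1 - ‖p.1‖ ^ 2)) (x, v) :=
      (d1.pow 2).add (d3.mul ((differentiableAt_const (1:ℝ)).sub d2))
    exact this
  have hTfDiff : DifferentiableAt ℝ (fun p : E × E => Tf p.1 p.2) (x, v) := by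
    have h' : DifferentiableAt ℝ
        (fun p : E × E => ((⟪p.1, p.2⟫ : ℝ) + Real.sqrt (Del p.1 p.2)) * (‖p.2‖ ^ 2)⁻¹) (x, v) :=
      (d1.add (hDelDiff.sqrt hδ.ne')).mul (d3.inv hn.ne')
    have hfun : (fun p : E × E => Tf p.1 p.2)
        = fun p : E × E => ((⟪p.1, p.2⟫ : ℝ) + Real.sqrt (Del p.1 p.2)) * (‖p.2‖ ^ 2)⁻¹ := by
      funext p; rw [Tf, sg, div_eq_mul_inv]
    rw [hfun]; exact h'
  have hGeq1 : (dot v (xb x v))⁻¹ • xb x v = (sg x v)⁻¹ • (Tf x v • v - x) := by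
    rw [hdot, hxbv, inv_neg, neg_smul, ← smul_neg, neg_sub]
  have hg1 : HasGradientAt (fun y => tb y v) ((dot v (xb x v))⁻¹ • xb x v) x := by
    rw [hasGradientAt_iff_hasFDerivAt, hGeq1]
    exact (hasFDerivAt_Tf1 hx hv).congr_of_eventuallyEq heq1
  have hGeq2 : -((tb x v * (dot v (xb x v))⁻¹) • xb x v)
      = (Tf x v * (sg x v)⁻¹) • (x - Tf x v • v) := by
    rw [tb_eq hx hv, hdot, hxbv, inv_neg, mul_neg, neg_smul, neg_neg]
  have hg2 : HasGradientAt (fun w => tb x w) (-((tb x v * (dot v (xb x v))⁻¹) • xb x v)) v := by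
    rw [hasGradientAt_iff_hasFDerivAt, hGeq2]
    exact (hasFDerivAt_Tf2 hx hv).congr_of_eventuallyEq heq2
  refine ⟨?_, ?_, ?_, hg1.gradient, hg2.gradient, ?_, ?_⟩
  · rw [hdot]; linarith
  · exact hTfDiff.congr_of_eventuallyEq heqT
  · have hd : DifferentiableAt ℝ (fun p : E × E => p.1 - Tf p.1 p.2 • p.2) (x, v) :=
      differentiableAt_fst.sub (hTfDiff.smul differentiableAt_snd)
    apply hd.congr_of_eventuallyEq
    filter_upwards [hU.mem_nhds hmem] with p hp
    rw [xb, tb_eq hp.1 hp.2]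
  · have h := (hasFDerivAt_id x).sub ((hasFDerivAt_Tf1 hx hv).smul (hasFDerivAt_const v x))
    have heq1' : (fun y => xb y v) =ᶠ[𝓝 x] fun y : E => y - Tf y v • v := by
      filter_upwards [hball] with y hy
      rw [xb, tb_eq hy hv]
    have h2 := h.congr_of_eventuallyEq heq1'
    refine HasFDerivAt.congr_fderiv h2 (Eq.symm ?_)
    rw [hdot, hxbv, inv_neg]
    refine ContinuousLinearMap.ext fun w => ?_
    refine PiLp.ext fun i => ?_
    fin_cases i <;>
    · simp [toCLM_apply, Matrix.sub_apply, Matrix.smul_apply, Matrix.one_apply, outer,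
        ContinuousLinearMap.sub_apply, ContinuousLinearMap.add_apply,
        ContinuousLinearMap.smulRight_apply, innerSL_apply_apply, PiLp.inner_apply,
        RCLike.inner_apply, Fin.sum_univ_two, PiLp.sub_apply, PiLp.smul_apply,
        smul_eq_mul]
      ring
  · have h := (hasFDerivAt_const x v).sub ((hasFDerivAt_Tf2 hx hv).smul (hasFDerivAt_id v))
    have heq2' : (fun w => xb x w) =ᶠ[𝓝 v] fun w : E => x - Tf x w • w := by
      filter_upwards [eventually_ne_nhds hv] with w hw
      rw [xb, tb_eq hx hw]
    have h2 := h.congr_of_eventuallyEq heq2'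
    refine HasFDerivAt.congr_fderiv h2 (Eq.symm ?_)
    rw [hdot, hxbv, inv_neg, tb_eq hx hv]
    refine ContinuousLinearMap.ext fun w => ?_
    refine PiLp.ext fun i => ?_
    fin_cases i <;>
    · simp [toCLM_apply, Matrix.sub_apply, Matrix.smul_apply, Matrix.one_apply, outer,
        ContinuousLinearMap.sub_apply, ContinuousLinearMap.add_apply,
        ContinuousLinearMap.smulRight_apply, innerSL_apply_apply, PiLp.inner_apply,
        RCLike.inner_apply, Fin.sum_univ_two, PiLp.sub_apply, PiLp.smul_apply,
        smul_eq_mul]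
      ring
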